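/- Let μ(n,d) = 2^{dC(n,2)} − 1 − Σ_{r=1}^{n−2} C(n,r)(2^d − 1)^{C(n−r,2)} and let ν(n,d) be the lower bound of Proposition (even/odd cases as stated). Then for d ≥ 2: if n is even, μ(n,d)/ν(n,d) ≤ ∏_{j=1}^∞ 1/(1 − q^{1−2j}) ≤ e^{(q+1)/(q(q−1))}, and if n is odd, μ(n,d)/ν(n,d) ≤ 2∏_{j=1}^∞ 1/(1 − q^{1−2j}) ≤ 2e^{(q+1)/(q(q−1))}, where q = 2^d. -/

import Mathlib

open Finset Real


/-- The upper bound `μ(n,d) = 2^{d·C(n,2)} - 1 - Σ_{r=1}^{n-2} C(n,r)(2^d-1)^{C(n-r,2)}`. -/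
noncomputable def muBound (n d : ℕ) : ℝ :=
  2 ^ (d * (n * (n - 1) / 2)) - 1
    - ∑ r ∈ Finset.Icc 1 (n - 2),
        (n.choose r : ℝ) * ((2 : ℝ) ^ d - 1) ^ ((n - r) * (n - r - 1) / 2)

/-- The lower bound `ν(n,d)` (with `q = 2^d`):
`q^{C(n,2)} ∏_{j=1}^{⌈(n-1)/2⌉}(1-q^{1-2j})` for `n` even, and
`(q^{n-1}-2^{n-1}) q^{C(n-1,2)} ∏_{j=1}^{⌈(n-2)/2⌉}(1-q^{1-2j})` for `n` odd. -/
noncomputable def nuBound (n d : ℕ) : ℝ :=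
  if Even n then
    ((2 : ℝ) ^ d) ^ (n * (n - 1) / 2)
      * ∏ j ∈ Finset.Icc 1 (n / 2), (1 - ((2 : ℝ) ^ d) ^ ((1 : ℤ) - 2 * (j : ℤ)))
  else
    ((2 : ℝ) ^ (d * (n - 1)) - 2 ^ (n - 1))
      * ((2 : ℝ) ^ d) ^ ((n - 1) * (n - 2) / 2)
      * ∏ j ∈ Finset.Icc 1 ((n - 1) / 2), (1 - ((2 : ℝ) ^ d) ^ ((1 : ℤ) - 2 * (j : ℤ)))

lemma zpow_term_pos {q : ℝ} (hq : 4 ≤ q) (k : ℤ) : (0:ℝ) < q ^ k :=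
  zpow_pos (by linarith) k

lemma zpow_term_le {q : ℝ} (hq : 4 ≤ q) {k : ℤ} (hk : k ≤ -1) : q ^ k ≤ q⁻¹ := by
  have h1 : (1:ℝ) ≤ q := by linarith
  calc q ^ k ≤ q ^ (-1:ℤ) := zpow_le_zpow_right₀ h1 hk
    _ = q⁻¹ := zpow_neg_one q

lemma one_sub_pos' {q : ℝ} (hq : 4 ≤ q) {k : ℤ} (hk : k ≤ -1) : (3/4:ℝ) ≤ 1 - q ^ k := by
  have := zpow_term_le hq hk
  have hi : q⁻¹ ≤ 4⁻¹ := inv_anti₀ (by norm_num) hq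
  linarith

lemma key_tprod {q : ℝ} (hq : 4 ≤ q) :
    (∀ m : ℕ, ∏ j ∈ Finset.range m, (1 - q ^ ((1 : ℤ) - 2 * ((j : ℤ) + 1)))⁻¹
        ≤ ∏' j : ℕ, (1 - q ^ ((1 : ℤ) - 2 * ((j : ℤ) + 1)))⁻¹) ∧
    (∏' j : ℕ, (1 - q ^ ((1 : ℤ) - 2 * ((j : ℤ) + 1)))⁻¹)
        ≤ Real.exp ((q + 1) / (q * (q - 1))) := by
  have hq0 : (0:ℝ) < q := by linarith
  have hq1 : (1:ℝ) < q := by linarith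
  set f : ℕ → ℝ := fun j => (1 - q ^ ((1 : ℤ) - 2 * ((j : ℤ) + 1)))⁻¹ with hf
  have hexp : ∀ j : ℕ, ((1 : ℤ) - 2 * ((j : ℤ) + 1)) ≤ -1 := by intro j; omega
  have hx_pos : ∀ j : ℕ, (0:ℝ) < q ^ ((1 : ℤ) - 2 * ((j : ℤ) + 1)) :=
    fun j => zpow_term_pos hq _
  have h1x : ∀ j : ℕ, (3/4:ℝ) ≤ 1 - q ^ ((1 : ℤ) - 2 * ((j : ℤ) + 1)) :=
    fun j => one_sub_pos' hq (hexp j)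
  have hfpos : ∀ j : ℕ, 0 < f j := fun j => inv_pos.mpr (by linarith [h1x j])
  set g : ℕ → ℝ := fun j => Real.log (f j) with hg
  have hx_eq : ∀ j : ℕ, q ^ ((1 : ℤ) - 2 * ((j : ℤ) + 1)) = q⁻¹ * ((q*q)⁻¹)^j := by
    intro j
    have : (1 : ℤ) - 2 * ((j : ℤ) + 1) = -((2*j+1 : ℕ) : ℤ) := by push_cast; ring
    rw [this, zpow_neg, zpow_natCast]
    rw [show q ^ (2*j+1) = q * (q*q)^j by rw [pow_add, pow_mul]; ring]
    rw [mul_inv, inv_pow]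
  have hg_nonneg : ∀ j : ℕ, 0 ≤ g j := by
    intro j
    apply Real.log_nonneg
    rw [hf]
    rw [one_le_inv_iff₀]
    constructor
    · linarith [h1x j]
    · linarith [hx_pos j]
  have hinvq : q⁻¹ ≤ 4⁻¹ := inv_anti₀ (by norm_num) hq
  have hg_le : ∀ j : ℕ, g j ≤ (q/(q-1)) * (q⁻¹ * ((q*q)⁻¹)^j) := by
    intro j
    set x := q ^ ((1 : ℤ) - 2 * ((j : ℤ) + 1)) with hxd
    have hx1 : x ≤ q⁻¹ := zpow_term_le hq (hexp j)
    have h2 : (0:ℝ) < 1 - x := by linarith [h1x j]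
    have h2' : (0:ℝ) < 1 - q⁻¹ := by linarith
    have h5 : g j ≤ (1 - x)⁻¹ - 1 := by
      have := Real.log_le_sub_one_of_pos (hfpos j)
      simpa [hg, hf] using this
    have h3 : (1 - x)⁻¹ - 1 = x / (1 - x) := by field_simp; ring
    have h4 : x / (1 - x) ≤ x / (1 - q⁻¹) :=
      div_le_div_of_nonneg_left (le_of_lt (hx_pos j)) h2' (by linarith)
    have h6 : x / (1 - q⁻¹) = (q/(q-1)) * x := by
      have hne : q ≠ 0 := by linarith
      have h1' : q - 1 ≠ 0 := by linarith
      field_simp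
    have h7 : (q/(q-1)) * x = (q/(q-1)) * (q⁻¹ * ((q*q)⁻¹)^j) := by rw [hxd, hx_eq]
    linarith
  -- summability
  have hr1 : (q*q)⁻¹ < 1 := by
    rw [inv_lt_one_iff₀]
    right; nlinarith
  have hsum_geo : Summable (fun j : ℕ => (q/(q-1)) * (q⁻¹ * ((q*q)⁻¹)^j)) := by
    apply Summable.mul_left
    apply Summable.mul_left
    exact summable_geometric_of_lt_one (by positivity) hr1
  have hsumg : Summable g := Summable.of_nonneg_of_le hg_nonneg hg_le hsum_geo
  have htsum_le : ∑' j, g j ≤ (q+1) / (q * (q-1)) := by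
    have h1 : ∑' j, g j ≤ ∑' j, (q/(q-1)) * (q⁻¹ * ((q*q)⁻¹)^j) :=
      Summable.tsum_le_tsum hg_le hsumg hsum_geo
    have h2 : ∑' j : ℕ, (q/(q-1)) * (q⁻¹ * ((q*q)⁻¹)^j)
        = (q/(q-1)) * q⁻¹ * (1 - (q*q)⁻¹)⁻¹ := by
      rw [tsum_mul_left, tsum_mul_left, tsum_geometric_of_lt_one (by positivity) hr1]
      ring
    have h3 : (q/(q-1)) * q⁻¹ * (1 - (q*q)⁻¹)⁻¹ ≤ (q+1) / (q * (q-1)) := by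
      have hne : q ≠ 0 := by linarith
      have h1' : q - 1 ≠ 0 := by linarith
      have h2' : q*q - 1 ≠ 0 := by nlinarith
      have lhs_eq : (q/(q-1)) * q⁻¹ * (1 - (q*q)⁻¹)⁻¹ = q*q / ((q-1)*((q-1)*(q+1))) := by
        rw [show (1 - (q*q)⁻¹) = (q*q-1)/(q*q) by field_simp]
        rw [inv_div]
        field_simp
        rw [div_eq_one_iff_eq (by nlinarith)]
        ring
      rw [lhs_eq, div_le_div_iff₀ (by nlinarith) (by nlinarith)]
      have key : q*q*q ≤ (q+1)*(q+1)*(q-1) := by nlinarith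
      nlinarith [mul_le_mul_of_nonneg_right key (show (0:ℝ) ≤ q-1 by linarith)]
    linarith
  -- conclude
  have hfe : (Real.exp ∘ g) = f := by
    funext j
    simp only [Function.comp_apply, hg]
    exact Real.exp_log (hfpos j)
  have hprod : HasProd f (Real.exp (∑' j, g j)) := hfe ▸ hsumg.hasSum.rexp
  rw [hprod.tprod_eq]
  constructor
  · intro m
    have h1 : ∏ j ∈ Finset.range m, f j = Real.exp (∑ j ∈ Finset.range m, g j) := by
      rw [Real.exp_sum]
      apply Finset.prod_congr rfl
      intro j _
      exact (Real.exp_log (hfpos j)).symm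
    rw [h1]
    apply Real.exp_le_exp.mpr
    exact Summable.sum_le_tsum _ (fun j _ => hg_nonneg j) hsumg
  · exact Real.exp_le_exp.mpr htsum_le

lemma fin_prod_pos {q : ℝ} (hq : 4 ≤ q) (m : ℕ) :
    0 < ∏ j ∈ Finset.Icc 1 m, (1 - q ^ ((1:ℤ) - 2*(j:ℤ))) := by
  apply Finset.prod_pos
  intro j hj
  have hj1 : 1 ≤ j := (Finset.mem_Icc.mp hj).1
  have h : ((1:ℤ) - 2*(j:ℤ)) ≤ -1 := by omega
  linarith [one_sub_pos' hq h]

lemma fin_prod_inv_le {q : ℝ} (hq : 4 ≤ q) (m : ℕ) :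
    (∏ j ∈ Finset.Icc 1 m, (1 - q ^ ((1:ℤ) - 2*(j:ℤ))))⁻¹
      ≤ ∏' j : ℕ, (1 - q ^ ((1 : ℤ) - 2 * ((j : ℤ) + 1)))⁻¹ := by
  obtain ⟨hble, _⟩ := key_tprod hq
  have hone : ∀ j : ℕ, 1 ≤ (1 - q ^ ((1 : ℤ) - 2 * ((j : ℤ) + 1)))⁻¹ := by
    intro j
    have h1 := one_sub_pos' hq (show (1:ℤ) - 2*((j:ℤ)+1) ≤ -1 by omega)
    have h2 := zpow_term_pos hq ((1:ℤ) - 2*((j:ℤ)+1))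
    rw [one_le_inv_iff₀]
    constructor <;> linarith
  rw [← Finset.prod_inv_distrib]
  have hre : ∏ j ∈ Finset.Icc 1 m, (1 - q ^ ((1:ℤ) - 2*(j:ℤ)))⁻¹
      = ∏ j ∈ Finset.range m, (1 - q ^ ((1 : ℤ) - 2 * ((j : ℤ) + 1)))⁻¹ := by
    rw [← Finset.Ico_add_one_right_eq_Icc, Finset.prod_Ico_eq_prod_range]
    apply Finset.prod_congr rfl
    intro j _
    have h : ((1:ℤ) - 2*((1+j : ℕ) : ℤ)) = (1:ℤ) - 2*((j:ℤ)+1) := by push_cast; ring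
    rw [h]
  rw [hre]
  exact hble m
lemma mu_le (n d : ℕ) : muBound n d ≤ ((2:ℝ)^d) ^ (n*(n-1)/2) := by
  unfold muBound
  rw [← pow_mul]
  have hsum : 0 ≤ ∑ r ∈ Finset.Icc 1 (n-2),
      (n.choose r : ℝ) * ((2:ℝ)^d - 1) ^ ((n-r)*(n-r-1)/2) := by
    apply Finset.sum_nonneg
    intro r _
    apply mul_nonneg (Nat.cast_nonneg _)
    apply pow_nonneg
    have : (1:ℝ) ≤ 2^d := one_le_pow₀ (by norm_num)
    linarith
  linarith


/-- For `d ≥ 2` and `q = 2^d`: if `n` is even then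
`μ(n,d)/ν(n,d) ≤ ∏_{j=1}^∞ 1/(1-q^{1-2j}) ≤ e^{(q+1)/(q(q-1))}`, and if `n` is odd then
`μ(n,d)/ν(n,d) ≤ 2∏_{j=1}^∞ 1/(1-q^{1-2j}) ≤ 2e^{(q+1)/(q(q-1))}`. -/
theorem stmt14 (n d : ℕ) (hn : 2 ≤ n) (hd : 2 ≤ d) :
    (Even n →
      muBound n d / nuBound n d
          ≤ ∏' j : ℕ, (1 - ((2 : ℝ) ^ d) ^ ((1 : ℤ) - 2 * ((j : ℤ) + 1)))⁻¹ ∧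
      (∏' j : ℕ, (1 - ((2 : ℝ) ^ d) ^ ((1 : ℤ) - 2 * ((j : ℤ) + 1)))⁻¹)
          ≤ Real.exp (((2 : ℝ) ^ d + 1) / ((2 : ℝ) ^ d * ((2 : ℝ) ^ d - 1)))) ∧
    (Odd n →
      muBound n d / nuBound n d
          ≤ 2 * ∏' j : ℕ, (1 - ((2 : ℝ) ^ d) ^ ((1 : ℤ) - 2 * ((j : ℤ) + 1)))⁻¹ ∧
      (2 * ∏' j : ℕ, (1 - ((2 : ℝ) ^ d) ^ ((1 : ℤ) - 2 * ((j : ℤ) + 1)))⁻¹)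
          ≤ 2 * Real.exp (((2 : ℝ) ^ d + 1) / ((2 : ℝ) ^ d * ((2 : ℝ) ^ d - 1)))) := by
  have hq : (4:ℝ) ≤ 2^d := by
    calc (4:ℝ) = 2^2 := by norm_num
    _ ≤ 2^d := pow_le_pow_right₀ (by norm_num) hd
  obtain ⟨hble, hte⟩ := key_tprod hq
  set q : ℝ := 2^d with hqdef
  have hμ := mu_le n d
  constructor
  · -- even case
    intro heven
    refine ⟨?_, hte⟩
    have hν : nuBound n d = q ^ (n*(n-1)/2)
        * ∏ j ∈ Finset.Icc 1 (n/2), (1 - q ^ ((1:ℤ) - 2*(j:ℤ))) := by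
      rw [nuBound, if_pos heven]
    have hP := fin_prod_pos hq (n/2)
    have hqC : (0:ℝ) < q ^ (n*(n-1)/2) := by positivity
    have hν_pos : 0 < nuBound n d := by rw [hν]; positivity
    calc muBound n d / nuBound n d
        ≤ q ^ (n*(n-1)/2) / nuBound n d := by gcongr
      _ = (∏ j ∈ Finset.Icc 1 (n/2), (1 - q ^ ((1:ℤ) - 2*(j:ℤ))))⁻¹ := by
          rw [hν, ← div_div, div_self hqC.ne', one_div]
      _ ≤ _ := fin_prod_inv_le hq (n/2)
  · -- odd case
    intro hodd
    refine ⟨?_, by linarith⟩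
    obtain ⟨m, rfl⟩ : ∃ m, n = 2*m+3 := ⟨(n-3)/2, by obtain ⟨k, hk⟩ := hodd; omega⟩
    have hnotev : ¬ Even (2*m+3) := by rw [Nat.even_iff]; omega
    have e1 : (2*m+3)*((2*m+3)-1)/2 = (2*m+2) + (m+1)*(2*m+1) := by
      rw [show (2*m+3)-1 = 2*(m+1) from by omega,
        show (2*m+3)*(2*(m+1)) = ((2*m+2)+(m+1)*(2*m+1))*2 from by ring,
        Nat.mul_div_cancel _ two_pos]
    have e2 : ((2*m+3)-1)*((2*m+3)-2)/2 = (m+1)*(2*m+1) := by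
      rw [show (2*m+3)-1 = 2*m+2 from by omega, show (2*m+3)-2 = 2*m+1 from by omega,
        show (2*m+2)*(2*m+1) = ((m+1)*(2*m+1))*2 from by ring,
        Nat.mul_div_cancel _ two_pos]
    have e3 : ((2*m+3)-1)/2 = m+1 := by omega
    have e4 : (2*m+3)-1 = 2*m+2 := by omega
    set A : ℝ := 2^(d*(2*m+2)) - 2^(2*m+2) with hA
    set P : ℝ := ∏ j ∈ Finset.Icc 1 (m+1), (1 - q ^ ((1:ℤ) - 2*(j:ℤ))) with hPdef
    have hν : nuBound (2*m+3) d = A * q ^ ((m+1)*(2*m+1)) * P := by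
      rw [nuBound, if_neg hnotev, e2, e3, e4]
    have hqpow : q ^ (2*m+2) = (2:ℝ)^(d*(2*m+2)) := by rw [hqdef, ← pow_mul]
    have h23 : (2:ℝ)^(2*m+3) ≤ 2^(d*(2*m+2)) := by
      apply pow_le_pow_right₀ (by norm_num)
      have : 2*(2*m+2) ≤ d*(2*m+2) := Nat.mul_le_mul_right _ hd
      omega
    have h22 : (2:ℝ)^(2*m+2) < 2^(2*m+3) :=
      pow_lt_pow_right₀ (by norm_num) (by omega)
    have hA_pos : 0 < A := by rw [hA]; linarith
    have h2e : (2:ℝ)^(2*m+3) = 2^(2*m+2) * 2 := by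
      rw [show 2*m+3 = (2*m+2)+1 from rfl, pow_succ]
    have h2A : q ^ (2*m+2) ≤ 2*A := by rw [hqpow, hA]; linarith
    have hP := fin_prod_pos hq (m+1)
    have hqC : (0:ℝ) < q ^ ((m+1)*(2*m+1)) := by positivity
    have hν_pos : 0 < nuBound (2*m+3) d := by rw [hν]; positivity
    have hμ2 : muBound (2*m+3) d ≤ 2*A * q ^ ((m+1)*(2*m+1)) := by
      have h5 : ((2:ℝ)^d) ^ ((2*m+3)*((2*m+3)-1)/2)
          = q ^ (2*m+2) * q ^ ((m+1)*(2*m+1)) := by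
        rw [e1, pow_add]
      have h6 : q ^ (2*m+2) * q ^ ((m+1)*(2*m+1)) ≤ 2*A * q ^ ((m+1)*(2*m+1)) := by
        apply mul_le_mul_of_nonneg_right h2A hqC.le
      calc muBound (2*m+3) d ≤ ((2:ℝ)^d) ^ ((2*m+3)*((2*m+3)-1)/2) := mu_le _ d
        _ = q ^ (2*m+2) * q ^ ((m+1)*(2*m+1)) := h5
        _ ≤ 2*A * q ^ ((m+1)*(2*m+1)) := h6
    calc muBound (2*m+3) d / nuBound (2*m+3) d
        ≤ (2*A * q ^ ((m+1)*(2*m+1))) / nuBound (2*m+3) d := by gcongr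
      _ = 2 * P⁻¹ := by
          rw [hν]
          rw [show A * q ^ ((m+1)*(2*m+1)) * P = (A * q ^ ((m+1)*(2*m+1))) * P from rfl,
            show (2*A * q ^ ((m+1)*(2*m+1))) = 2 * (A * q ^ ((m+1)*(2*m+1))) from by ring,
            mul_div_assoc, ← div_div, div_self (by positivity), one_div]
      _ ≤ 2 * ∏' j : ℕ, (1 - q ^ ((1 : ℤ) - 2 * ((j : ℤ) + 1)))⁻¹ := by
          have := fin_prod_inv_le hq (m+1)
          linarith
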